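/- Let q be an odd prime power of the form q = 2am + 1 for positive integers a, m. Then for every integer b with 1 ≤ b ≤ 2a and every integer s with 1 ≤ s ≤ (a+1)m, there exists a linear code C over 𝔽_{q²} of length n = b(q²−1)/(2a), dimension n − s, and minimum distance s + 1, such that C^{⊥H} ⊆ C. -/

import Mathlib

open Finset Polynomial

noncomputable def wt {F : Type*} [Zero F] {n : ℕ} (x : Fin n → F) : ℕ :=
  Set.ncard {i | x i ≠ 0}

noncomputable def dualH {F : Type*} [Field F] (q n : ℕ) (C : Submodule F (Fin n → F)) :
    Submodule F (Fin n → F) where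
  carrier := {x | ∀ y ∈ C, ∑ i, x i * (y i) ^ q = 0}
  add_mem' := by
    intro a b ha hb y hy
    simp only [Set.mem_setOf_eq] at *
    simp [add_mul, Finset.sum_add_distrib, ha y hy, hb y hy]
  zero_mem' := by
    intro y hy; simp
  smul_mem' := by
    intro c x hx y hy
    simp only [Set.mem_setOf_eq] at *
    simp [smul_eq_mul, mul_assoc, ← Finset.mul_sum, hx y hy]

lemma geom_zero {F : Type*} [Field F] {z : F} (h1 : z ≠ 1) {n : ℕ} (hn : z ^ n = 1) :
    ∑ t ∈ Finset.range n, z ^ t = 0 := by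
  rw [geom_sum_eq h1, hn]; simp

lemma sum_grid {β : Type*} [AddCommMonoid β] (b n' : ℕ) (f : ℕ → β) :
    ∑ i ∈ Finset.range (b * n'), f i
      = ∑ r ∈ Finset.range b, ∑ t ∈ Finset.range n', f (r * n' + t) := by
  induction b with
  | zero => simp
  | succ b ih =>
      rw [Nat.succ_mul, Finset.sum_range_add, ih, Finset.sum_range_succ]

lemma arith_key (a m M q s e j l : ℤ) (ha : 1 ≤ a) (hm : 1 ≤ m)
    (hM : M = a * m + 1) (hq : q = 2 * a * m + 1) (hs : s ≤ M + m - 1)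
    (hj0 : 0 ≤ j) (hjs : j < s) (hl0 : 0 ≤ l) (hls : l < s)
    (he : e % 2 = 1)
    (he2 : ∀ i : ℤ, 0 ≤ i → i + M ≤ s - 1 → ¬ (2 * m ∣ e + 2 * i + 1)) :
    ¬ (2 * m * M ∣ M * e + q * j + l) := by
  rintro ⟨c, hc⟩
  have hq' : q = 2 * M - 1 := by rw [hM, hq]; ring
  have hw : l - j = M * (2 * m * c - e - 2 * j) := by linear_combination hc - j * hq'
  set w : ℤ := 2 * m * c - e - 2 * j with hwdef
  have hMpos : 2 ≤ M := by nlinarith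
  have hwodd : w % 2 = 1 := by
    obtain ⟨t, ht⟩ : ∃ t : ℤ, m * c = t := ⟨_, rfl⟩
    have : w = 2 * t - e - 2 * j := by rw [hwdef, ← ht]; ring
    omega
  have hb1 : l - j < 2 * M := by nlinarith
  have hb2 : -(2 * M) < l - j := by nlinarith
  have hw1 : w < 2 := by nlinarith
  have hw2 : -2 < w := by nlinarith
  have : w = 1 ∨ w = -1 := by omega
  rcases this with h1 | h1
  · have hlj : l - j = M := by rw [hw, h1, mul_one]
    refine he2 j hj0 (by omega) ⟨c, by omega⟩
  · have hlj : l - j = -M := by rw [hw, h1]; ring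
    refine he2 l hl0 (by omega) ⟨c - a, ?_⟩
    have h3 : e + 2 * j - 1 = 2 * m * c := by omega
    rw [hM] at *
    linarith [h3]

lemma lag_coeff {F : Type*} [Field F] {ι : Type*} [DecidableEq ι] {T : Finset ι} {v : ι → F}
    (hv : Set.InjOn v T) {i : ι} (hi : i ∈ T) :
    (Lagrange.basis T v i).coeff (T.card - 1) = ∏ j ∈ T.erase i, (v i - v j)⁻¹ := by
  have hd := Lagrange.natDegree_basis hv hi
  rw [← hd, Polynomial.coeff_natDegree, Lagrange.basis, Polynomial.leadingCoeff_prod]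
  refine Finset.prod_congr rfl fun j hj => ?_
  rw [Lagrange.basisDivisor, Polynomial.leadingCoeff_mul, Polynomial.leadingCoeff_C,
    Polynomial.leadingCoeff_X_sub_C, mul_one]

lemma lag_sum {F : Type*} [Field F] {ι : Type*} [DecidableEq ι] {T : Finset ι} {v : ι → F}
    (hv : Set.InjOn v T) {j : ℕ} (hj : j + 1 < T.card) :
    ∑ i ∈ T, v i ^ j * ∏ i' ∈ T.erase i, (v i - v i')⁻¹ = 0 := by
  have hdeg : (Polynomial.X ^ j : F[X]).degree < T.card := by
    rw [Polynomial.degree_X_pow]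
    exact_mod_cast Nat.lt_of_succ_lt hj
  have hint := Lagrange.eq_interpolate hv hdeg
  have h2 : ((Lagrange.interpolate T v) fun i => Polynomial.eval (v i) (X ^ j)).coeff (T.card - 1)
      = (X ^ j : F[X]).coeff (T.card - 1) := by rw [← hint]
  rw [Polynomial.coeff_X_pow, if_neg (by omega)] at h2
  rw [Lagrange.interpolate_apply, Polynomial.finset_sum_coeff] at h2
  calc ∑ i ∈ T, v i ^ j * ∏ i' ∈ T.erase i, (v i - v i')⁻¹
      = ∑ i ∈ T, (C (Polynomial.eval (v i) (X ^ j)) * Lagrange.basis T v i).coeff (T.card - 1) := by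
        refine Finset.sum_congr rfl fun i hi => ?_
        rw [Polynomial.coeff_C_mul, lag_coeff hv hi, Polynomial.eval_pow, Polynomial.eval_X]
    _ = 0 := h2

lemma KZ {F : Type*} [Field F] {n s : ℕ} {α u : Fin n → F} (hα : Function.Injective α)
    (hu : ∀ i, u i ≠ 0)
    {x : Fin n → F} (hx : ∀ j : ℕ, j < s → ∑ i, u i * α i ^ j * x i = 0)
    {T : Finset (Fin n)} (hT : T.card ≤ s) (hsupp : ∀ i, x i ≠ 0 → i ∈ T) :
    x = 0 := by
  funext i0
  by_contra hxi
  have hxi' : x i0 ≠ 0 := by simpa using hxi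
  have hi0 : i0 ∈ T := hsupp i0 hxi'
  set L : Polynomial F := ∏ i' ∈ T.erase i0, (Polynomial.X - Polynomial.C (α i')) with hL
  have hdeg : L.natDegree = T.card - 1 := by
    rw [hL, Polynomial.natDegree_prod _ _ (fun i _ => Polynomial.X_sub_C_ne_zero _)]
    simp [Polynomial.natDegree_X_sub_C, Finset.card_erase_of_mem hi0]
  have hcard : 1 ≤ T.card := Finset.card_pos.mpr ⟨i0, hi0⟩
  have hdeg' : L.natDegree < s := by omega
  have key : ∑ i, u i * x i * Polynomial.eval (α i) L = 0 := by
    calc ∑ i, u i * x i * Polynomial.eval (α i) L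
        = ∑ i, ∑ j ∈ Finset.range s, L.coeff j * (u i * α i ^ j * x i) := by
          refine Finset.sum_congr rfl fun i _ => ?_
          rw [Polynomial.eval_eq_sum_range' hdeg', Finset.mul_sum]
          refine Finset.sum_congr rfl fun jj _ => by ring
      _ = ∑ j ∈ Finset.range s, L.coeff j * ∑ i, u i * α i ^ j * x i := by
          rw [Finset.sum_comm]
          exact Finset.sum_congr rfl fun jj _ => by rw [Finset.mul_sum]
      _ = 0 := Finset.sum_eq_zero fun jj hjj => by
          rw [hx jj (Finset.mem_range.mp hjj), mul_zero]
  have hsingle : u i0 * x i0 * Polynomial.eval (α i0) L = 0 := by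
    rw [← key]
    symm
    refine Finset.sum_eq_single i0 (fun i _ hne => ?_) (fun h => absurd (Finset.mem_univ i0) h)
    by_cases hiT : i ∈ T
    · have hz : Polynomial.eval (α i) L = 0 := by
        rw [hL, Polynomial.eval_prod]
        exact Finset.prod_eq_zero (Finset.mem_erase.mpr ⟨hne, hiT⟩) (by simp)
      rw [hz, mul_zero]
    · have : x i = 0 := by_contra fun h => hiT (hsupp i h)
      rw [this]; ring
  have hL0 : Polynomial.eval (α i0) L ≠ 0 := by
    rw [hL, Polynomial.eval_prod]
    refine Finset.prod_ne_zero_iff.mpr fun i hi => ?_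
    simp only [Polynomial.eval_sub, Polynomial.eval_X, Polynomial.eval_C]
    exact sub_ne_zero.mpr fun h => (Finset.mem_erase.mp hi).1 (hα h.symm)
  rcases mul_eq_zero.mp hsingle with h | h
  · rcases mul_eq_zero.mp h with h' | h'
    · exact hu i0 h'
    · exact hxi' h'
  · exact hL0 h

theorem stmt_6 (q a m : ℕ) (ha : 0 < a) (hm : 0 < m) (hq : q = 2 * a * m + 1)
    (hodd : Odd q) (hpp : IsPrimePow q)
    (F : Type*) [Field F] [Fintype F] (hF : Fintype.card F = q ^ 2)
    (b s : ℕ) (hb1 : 1 ≤ b) (hb2 : b ≤ 2 * a) (hs1 : 1 ≤ s) (hs2 : s ≤ (a + 1) * m) :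
    ∃ C : Submodule F (Fin (b * (q ^ 2 - 1) / (2 * a)) → F),
      dualH q (b * (q ^ 2 - 1) / (2 * a)) C ≤ C ∧
      Module.finrank F C = (b * (q ^ 2 - 1) / (2 * a)) - s ∧
      IsLeast {d : ℕ | ∃ x ∈ C, x ≠ 0 ∧ wt x = d} (s + 1) := by
  classical
  have h2a : 0 < 2 * a := by omega
  set M : ℕ := a * m + 1 with hMdef
  set n' : ℕ := 2 * m * M with hn'def
  set n : ℕ := b * n' with hndef
  have hq2n : q ^ 2 = 2 * a * n' + 1 := by rw [hq, hn'def, hMdef]; ring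
  have hN : q ^ 2 - 1 = 2 * a * n' := by omega
  have hlen : b * (q ^ 2 - 1) / (2 * a) = n := by
    have h1 : b * (q ^ 2 - 1) = 2 * a * n := by rw [hN, hndef]; ring
    rw [h1, Nat.mul_div_cancel_left _ h2a]
  rw [hlen]
  have hn'pos : 0 < n' := by positivity
  have hnpos : 0 < n := by positivity
  have hsM : s ≤ M + m - 1 := by
    have h1 : (a + 1) * m = a * m + m := by ring
    omega
  set e : ℕ := 2 * m - 1 - 2 * (s - M) with hedef
  have he1 : e + 2 * (s - M) + 1 = 2 * m := by omega
  have hq1 : q + 1 = 2 * M := by rw [hq, hMdef]; ring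
  -- generator
  obtain ⟨g, hg⟩ := IsCyclic.exists_generator (α := Fˣ)
  have hgord : orderOf g = q ^ 2 - 1 := by
    rw [orderOf_eq_card_of_forall_mem_zpowers hg, Nat.card_eq_fintype_card,
      Fintype.card_units, hF]
  set gF : F := (g : F) with hgFdef
  have hgF1 : ∀ x : ℕ, gF ^ x = ((g ^ x : Fˣ) : F) := fun x => (Units.val_pow_eq_pow_val g x).symm
  set αe : ℕ → ℕ := fun i => i / n' + 2 * a * (i % n') with hαedef
  set ue : ℕ → ℕ := fun i => a * (i % n') * e with huedef
  set αF : Fin n → F := fun i => gF ^ (αe i) with hαFdef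
  set uF : Fin n → F := fun i => gF ^ (ue i) with huFdef
  have hgne : gF ≠ 0 := Units.ne_zero g
  have hune : ∀ i, uF i ≠ 0 := fun i => pow_ne_zero _ hgne
  have hαne : ∀ i, αF i ≠ 0 := fun i => pow_ne_zero _ hgne
  -- injectivity of αF
  have hαlt : ∀ iv : Fin n, αe iv < q ^ 2 - 1 := by
    intro iv
    have h1 : (iv : ℕ) / n' < b := (Nat.div_lt_iff_lt_mul hn'pos).mpr iv.2
    have h2 : (iv : ℕ) % n' < n' := Nat.mod_lt _ hn'pos
    have h3 : 2 * a * ((iv : ℕ) % n') ≤ 2 * a * (n' - 1) :=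
      Nat.mul_le_mul_left _ (by omega)
    have h4 : 2 * a * (n' - 1) + 2 * a = 2 * a * n' := by
      have h5 : (n' - 1) + 1 = n' := by omega
      calc 2 * a * (n' - 1) + 2 * a = 2 * a * ((n' - 1) + 1) := by ring
        _ = 2 * a * n' := by rw [h5]
    show (iv : ℕ) / n' + 2 * a * ((iv : ℕ) % n') < q ^ 2 - 1
    rw [hN]
    set X := (iv : ℕ) / n'
    set Y := 2 * a * ((iv : ℕ) % n')
    set Z := 2 * a * (n' - 1)
    set W := 2 * a * n'
    omega
  have hginj : ∀ x y : ℕ, x < q ^ 2 - 1 → y < q ^ 2 - 1 → g ^ x = g ^ y → x = y := by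
    intro x y hx hy hxy
    have h := pow_eq_pow_iff_modEq.mp hxy
    rw [hgord] at h
    rwa [Nat.ModEq, Nat.mod_eq_of_lt hx, Nat.mod_eq_of_lt hy] at h
  have hαinj : Function.Injective αF := by
    intro i i' hii
    have h1 : (g ^ αe (i : ℕ) : Fˣ) = g ^ αe (i' : ℕ) := by
      apply Units.ext
      rw [Units.val_pow_eq_pow_val, Units.val_pow_eq_pow_val]
      exact hii
    have h2 : (i : ℕ) / n' + 2 * a * ((i : ℕ) % n')
        = (i' : ℕ) / n' + 2 * a * ((i' : ℕ) % n') := hginj _ _ (hαlt i) (hαlt i') h1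
    -- decode
    have hr : (i : ℕ) / n' = (i' : ℕ) / n' := by
      have e1 : ((i : ℕ) / n' + 2 * a * ((i : ℕ) % n')) % (2 * a) = (i : ℕ) / n' % (2 * a) :=
        Nat.add_mul_mod_self_left _ _ _
      have e2 : ((i' : ℕ) / n' + 2 * a * ((i' : ℕ) % n')) % (2 * a) = (i' : ℕ) / n' % (2 * a) :=
        Nat.add_mul_mod_self_left _ _ _
      have hi1 : (i : ℕ) / n' < 2 * a := lt_of_lt_of_le ((Nat.div_lt_iff_lt_mul hn'pos).mpr i.2) hb2
      have hi2 : (i' : ℕ) / n' < 2 * a := lt_of_lt_of_le ((Nat.div_lt_iff_lt_mul hn'pos).mpr i'.2) hb2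
      rw [Nat.mod_eq_of_lt hi1] at e1
      rw [Nat.mod_eq_of_lt hi2] at e2
      rw [← e1, ← e2, h2]

    have ht : (i : ℕ) % n' = (i' : ℕ) % n' := by
      have h3 : 2 * a * ((i : ℕ) % n') = 2 * a * ((i' : ℕ) % n') := by omega
      exact Nat.eq_of_mul_eq_mul_left h2a h3
    have hda := Nat.div_add_mod (i : ℕ) n'
    have hdb := Nat.div_add_mod (i' : ℕ) n'
    rw [hr, ht] at hda
    apply Fin.ext
    omega
  -- MAIN SUM
  have hMAIN : ∀ jj ll : ℕ, jj < s → ll < s →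
      ∑ i : Fin n, uF i ^ (q + 1) * αF i ^ (q * jj + ll) = 0 := by
    intro jj ll hjj hll
    set k : ℕ := q * jj + ll with hkdef
    set Ez : ℕ := a * e * (q + 1) + 2 * a * k with hEzdef
    have hEz2 : Ez = 2 * a * (M * e + k) := by
      rw [hEzdef, hq1]; ring
    have hg1 : gF ^ (q ^ 2 - 1) = 1 := by
      have h0 : (g ^ (q ^ 2 - 1) : Fˣ) = 1 := by rw [← hgord]; exact pow_orderOf_eq_one g
      rw [hgF1, h0, Units.val_one]
    have hζpow : (gF ^ Ez) ^ n' = (1 : F) := by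
      rw [← pow_mul]
      have h1 : Ez * n' = (q ^ 2 - 1) * (M * e + k) := by rw [hEz2, hN]; ring
      rw [h1, pow_mul, hg1, one_pow]
    have hζne : gF ^ Ez ≠ (1 : F) := by
      intro hone
      have hu1 : (g ^ Ez : Fˣ) = 1 := by
        apply Units.ext
        rw [Units.val_pow_eq_pow_val, Units.val_one]
        exact hone
      have hdvd : (q ^ 2 - 1) ∣ Ez := by
        rw [← hgord]
        exact orderOf_dvd_iff_pow_eq_one.mpr hu1
      rw [hEz2, hN] at hdvd
      have hdvd2 : n' ∣ M * e + k := (Nat.mul_dvd_mul_iff_left h2a).mp hdvd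
      have hdvd3 : (2 * (m : ℤ) * (M : ℤ)) ∣ ((M : ℤ) * (e : ℤ) + (q : ℤ) * (jj : ℤ) + (ll : ℤ)) := by
        have hc := Int.natCast_dvd_natCast.mpr hdvd2
        have h1 : ((n' : ℕ) : ℤ) = 2 * (m : ℤ) * (M : ℤ) := by
          rw [hn'def]; push_cast; ring
        have h2 : ((M * e + k : ℕ) : ℤ) = (M : ℤ) * (e : ℤ) + (q : ℤ) * (jj : ℤ) + (ll : ℤ) := by
          rw [hkdef]; push_cast; ring
        rwa [h1, h2] at hc
      refine arith_key a m M q s e jj ll (by exact_mod_cast ha) (by exact_mod_cast hm)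
        (by rw [hMdef]; push_cast; ring) (by rw [hq]; push_cast; ring) (by omega)
        (Int.ofNat_nonneg jj) (by exact_mod_cast hjj) (Int.ofNat_nonneg ll)
        (by exact_mod_cast hll) (by omega) ?_ hdvd3
      intro i hi0 hi1 hdv
      have hle := Int.le_of_dvd (by omega) hdv
      omega
    have hdm : ∀ r t : ℕ, t < n' →
        ue (r * n' + t) = a * t * e ∧ αe (r * n' + t) = r + 2 * a * t := by
      intro r t htlt
      have hmod : (r * n' + t) % n' = t := by
        rw [mul_comm r n', Nat.mul_add_mod, Nat.mod_eq_of_lt htlt]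
      have hdiv : (r * n' + t) / n' = r := by
        rw [mul_comm r n', Nat.mul_add_div hn'pos, Nat.div_eq_of_lt htlt, Nat.add_zero]
      constructor
      · show a * ((r * n' + t) % n') * e = a * t * e
        rw [hmod]
      · show (r * n' + t) / n' + 2 * a * ((r * n' + t) % n') = r + 2 * a * t
        rw [hmod, hdiv]
    calc ∑ i : Fin n, uF i ^ (q + 1) * αF i ^ (q * jj + ll)
        = ∑ i ∈ Finset.range n, gF ^ (ue i * (q + 1) + αe i * k) := by
          rw [← Fin.sum_univ_eq_sum_range (fun i => gF ^ (ue i * (q + 1) + αe i * k)) n]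
          refine Finset.sum_congr rfl fun i _ => ?_
          show (gF ^ ue (i : ℕ)) ^ (q + 1) * (gF ^ αe (i : ℕ)) ^ (q * jj + ll)
              = gF ^ (ue (i : ℕ) * (q + 1) + αe (i : ℕ) * k)
          rw [← pow_mul, ← pow_mul, ← pow_add, hkdef]
      _ = ∑ r ∈ Finset.range b, ∑ t ∈ Finset.range n',
            gF ^ (ue (r * n' + t) * (q + 1) + αe (r * n' + t) * k) := by
          rw [hndef]
          exact sum_grid b n' _
      _ = ∑ r ∈ Finset.range b, gF ^ (r * k) * ∑ t ∈ Finset.range n', (gF ^ Ez) ^ t := by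
          refine Finset.sum_congr rfl fun r _ => ?_
          rw [Finset.mul_sum]
          refine Finset.sum_congr rfl fun t htmem => ?_
          obtain ⟨hu', hα'⟩ := hdm r t (Finset.mem_range.mp htmem)
          rw [hu', hα', ← pow_mul, ← pow_add]
          congr 1
          rw [hEzdef]
          ring
      _ = 0 := by
          rw [geom_zero hζne hζpow]
          simp
  -- code
  set cF : Fin s → Fin n → F := fun j i => uF i * αF i ^ (j : ℕ) with hcFdef
  set φ : Fin s → ((Fin n → F) →ₗ[F] F) :=
    fun j => ∑ i, cF j i • (LinearMap.proj i : (Fin n → F) →ₗ[F] F) with hφdef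
  have hφapp : ∀ (j : Fin s) (x : Fin n → F), φ j x = ∑ i, uF i * αF i ^ (j : ℕ) * x i := by
    intro j x
    simp [hφdef, hcFdef, LinearMap.sum_apply, LinearMap.smul_apply, smul_eq_mul]
  set Φ : (Fin n → F) →ₗ[F] (Fin s → F) := LinearMap.pi φ with hΦdef
  set CC : Submodule F (Fin n → F) := LinearMap.ker Φ with hCCdef
  have hmemC : ∀ x, x ∈ CC ↔ ∀ j : Fin s, ∑ i, uF i * αF i ^ (j : ℕ) * x i = 0 := by
    intro x
    rw [hCCdef, LinearMap.mem_ker, hΦdef]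
    constructor
    · intro h j
      rw [← hφapp]
      exact congrFun h j
    · intro h
      funext j
      rw [LinearMap.pi_apply, hφapp]
      exact h j
  have hs1n : s + 1 ≤ n := by
    have h1 : s ≤ a * m + m := by
      have hh : (a + 1) * m = a * m + m := by ring
      omega
    have h2 : n' ≤ n := Nat.le_mul_of_pos_left n' hb1
    have h3 : a * m + m + 1 ≤ n' := by
      have hh : n' = 2 * m * (a * m) + 2 * m := by rw [hn'def, hMdef]; ring
      have h4 : a * m ≤ 2 * m * (a * m) := Nat.le_mul_of_pos_left _ (by omega)
      omega
    omega
  have hsn : s ≤ n := by omega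
  refine ⟨CC, ?_, ?_, ?_⟩
  · -- dual containment
    intro x hx
    rw [hmemC x]
    intro j
    set y : Fin n → F := fun i => (uF i * αF i ^ (j : ℕ)) ^ q with hydef
    have hyC : y ∈ CC := by
      rw [hmemC y]
      intro l
      have hterm : ∀ i : Fin n, uF i * αF i ^ (l : ℕ) * y i
          = uF i ^ (q + 1) * αF i ^ (q * (j : ℕ) + (l : ℕ)) := by
        intro i
        show uF i * αF i ^ (l : ℕ) * (uF i * αF i ^ (j : ℕ)) ^ q = _
        rw [mul_pow, ← pow_mul]
        ring
      rw [Finset.sum_congr rfl (fun i _ => hterm i)]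
      exact hMAIN _ _ j.2 l.2
    have hsum := hx y hyC
    have hyq : ∀ i, y i ^ q = uF i * αF i ^ (j : ℕ) := by
      intro i
      show ((uF i * αF i ^ (j : ℕ)) ^ q) ^ q = _
      rw [← pow_mul]
      have hqq : q * q = q ^ 2 := (pow_two q).symm
      rw [hqq, ← hF, FiniteField.pow_card]
    calc ∑ i, uF i * αF i ^ (j : ℕ) * x i = ∑ i, x i * y i ^ q := by
          refine Finset.sum_congr rfl fun i _ => ?_
          rw [hyq i]; ring
      _ = 0 := hsum
  · -- dimension
    have hfr : Module.finrank F (Fin n → F) = n := by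
      rw [Module.finrank_pi, Fintype.card_fin]
    have hlow : n ≤ Module.finrank F CC + s := by
      have h1 := LinearMap.finrank_range_add_finrank_ker Φ
      have h2 : Module.finrank F (LinearMap.range Φ) ≤ s := by
        have h3 := Submodule.finrank_le (LinearMap.range Φ)
        rwa [Module.finrank_pi, Fintype.card_fin] at h3
      rw [hfr] at h1
      rw [hCCdef]
      omega
    set Ψ : (Fin n → F) →ₗ[F] (Fin (n - s) → F) :=
      LinearMap.pi (fun i => LinearMap.proj
        (⟨s + (i : ℕ), by have := i.2; omega⟩ : Fin n)) with hΨdef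
    have hD : s ≤ Module.finrank F (LinearMap.ker Ψ) := by
      have h1 := LinearMap.finrank_range_add_finrank_ker Ψ
      have h2 : Module.finrank F (LinearMap.range Ψ) ≤ n - s := by
        have h3 := Submodule.finrank_le (LinearMap.range Ψ)
        rwa [Module.finrank_pi, Fintype.card_fin] at h3
      rw [hfr] at h1
      omega
    have hdisj : CC ⊓ LinearMap.ker Ψ = ⊥ := by
      rw [Submodule.eq_bot_iff]
      intro x hxmem
      obtain ⟨hx1, hx2⟩ := Submodule.mem_inf.mp hxmem
      set T : Finset (Fin n) := Finset.univ.filter (fun i => (i : ℕ) < s) with hTdef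
      have hTcard : T.card ≤ s := by
        have h1 : ∀ i ∈ T, (i : ℕ) ∈ Finset.range s := by
          intro i hi
          rw [Finset.mem_range]
          exact (Finset.mem_filter.mp hi).2
        calc T.card ≤ (Finset.range s).card :=
              Finset.card_le_card_of_injOn (fun i => (i : ℕ)) h1
                (fun i _ i' _ hii => Fin.ext hii)
          _ = s := Finset.card_range s
      refine KZ hαinj hune (s := s) ?_ hTcard ?_
      · intro jn hjn
        exact (hmemC x).mp hx1 ⟨jn, hjn⟩
      · intro i hi
        rw [hTdef, Finset.mem_filter]
        refine ⟨Finset.mem_univ i, ?_⟩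
        by_contra hge
        push_neg at hge
        have hz : x ⟨s + ((i : ℕ) - s), by have := i.2; omega⟩ = 0 :=
          congrFun (LinearMap.mem_ker.mp hx2) ⟨(i : ℕ) - s, by have := i.2; omega⟩
        have hieq : (⟨s + ((i : ℕ) - s), by have := i.2; omega⟩ : Fin n) = i :=
          Fin.ext (by simp; omega)
        rw [hieq] at hz
        exact hi hz
    have hup : Module.finrank F CC + s ≤ n := by
      have h1 := Submodule.finrank_sup_add_finrank_inf_eq CC (LinearMap.ker Ψ)
      rw [hdisj] at h1
      have h2 : Module.finrank F ↥(CC ⊔ LinearMap.ker Ψ) ≤ n := by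
        have h3 := Submodule.finrank_le (CC ⊔ LinearMap.ker Ψ)
        rwa [hfr] at h3
      have h3 : Module.finrank F (⊥ : Submodule F (Fin n → F)) = 0 := finrank_bot F _
      omega
    omega
  · -- distance
    set T0 : Finset (Fin n) :=
      Finset.map ⟨Fin.castLE hs1n, Fin.castLE_injective hs1n⟩ Finset.univ with hT0def
    have hT0card : T0.card = s + 1 := by simp [hT0def]
    set xx : Fin n → F := fun i =>
      if i ∈ T0 then (uF i)⁻¹ * ∏ i' ∈ T0.erase i, (αF i - αF i')⁻¹ else 0 with hxxdef
    have hprodne : ∀ i ∈ T0, (∏ i' ∈ T0.erase i, (αF i - αF i')⁻¹) ≠ 0 := by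
      intro i hi
      refine Finset.prod_ne_zero_iff.mpr fun i' hi' => ?_
      refine inv_ne_zero (sub_ne_zero.mpr fun hh => ?_)
      exact (Finset.mem_erase.mp hi').1 (hαinj hh).symm
    have hxxne : ∀ i ∈ T0, xx i ≠ 0 := by
      intro i hi
      show (if i ∈ T0 then (uF i)⁻¹ * ∏ i' ∈ T0.erase i, (αF i - αF i')⁻¹ else 0) ≠ 0
      rw [if_pos hi]
      exact mul_ne_zero (inv_ne_zero (hune i)) (hprodne i hi)
    have hxx0 : ∀ i, i ∉ T0 → xx i = 0 := by
      intro i hi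
      show (if i ∈ T0 then (uF i)⁻¹ * ∏ i' ∈ T0.erase i, (αF i - αF i')⁻¹ else 0) = 0
      rw [if_neg hi]
    have hxxC : xx ∈ CC := by
      rw [hmemC]
      intro j
      calc ∑ i, uF i * αF i ^ (j : ℕ) * xx i
          = ∑ i ∈ T0, uF i * αF i ^ (j : ℕ) * xx i := by
            refine (Finset.sum_subset (Finset.subset_univ T0) fun i _ hi => ?_).symm
            rw [hxx0 i hi, mul_zero]
        _ = ∑ i ∈ T0, αF i ^ (j : ℕ) * ∏ i' ∈ T0.erase i, (αF i - αF i')⁻¹ := by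
            refine Finset.sum_congr rfl fun i hi => ?_
            have : xx i = (uF i)⁻¹ * ∏ i' ∈ T0.erase i, (αF i - αF i')⁻¹ := by
              show (if i ∈ T0 then _ else 0) = _
              rw [if_pos hi]
            rw [this]
            field_simp
            rw [mul_assoc, mul_div_cancel_left₀ _ (hune i)]
        _ = 0 := by
            refine lag_sum (Set.injOn_of_injective hαinj) ?_
            rw [hT0card]
            have := j.2
            omega
    constructor
    · -- s+1 belongs
      have hi0 : (Fin.castLE hs1n ⟨0, by omega⟩) ∈ T0 :=
        Finset.mem_map_of_mem _ (Finset.mem_univ _)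
      refine ⟨xx, hxxC, ?_, ?_⟩
      · intro h0
        exact hxxne _ hi0 (congrFun h0 _)
      · have hset : {i | xx i ≠ 0} = (T0 : Set (Fin n)) := by
          ext i
          simp only [Set.mem_setOf_eq, Finset.coe_sort_coe, Finset.mem_coe]
          constructor
          · intro hne
            by_contra hnot
            exact hne (hxx0 i hnot)
          · exact hxxne i
        show wt xx = s + 1
        unfold wt
        rw [hset, Set.ncard_coe_finset, hT0card]
    · -- lower bound
      rintro d ⟨y, hyC, hyne, rfl⟩
      by_contra hlt
      push_neg at hlt
      set T : Finset (Fin n) := Finset.univ.filter (fun i => y i ≠ 0) with hTdef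
      have hwt : wt y = T.card := by
        have hset : {i | y i ≠ 0} = (T : Set (Fin n)) := by
          ext i
          simp [hTdef]
        unfold wt
        rw [hset, Set.ncard_coe_finset]
      have hTcard : T.card ≤ s := by omega
      have hz := KZ hαinj hune (s := s)
        (fun jn hjn => (hmemC y).mp hyC ⟨jn, hjn⟩) hTcard
        (fun i hi => by simp [hTdef, hi])
      exact hyne hz
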